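/- Let ε ∈ ℝ, let U be a Laurent polynomial over ℂ satisfying U(−z) = U(z) for all z ≠ 0, let θ : ℝ → ℂ be a function satisfying sinh(θ(t)) = ε·U(e^{it}) and θ(t+π) = θ(t) for all t ∈ ℝ, and let μ₊ and μ₋ be Laurent polynomials over ℂ satisfying μ₊(−z) = μ₊(z) and μ₋(−z) = −μ₋(z) for all z ≠ 0. Define Y : ℝ → ℂ by Y(t) = e^{θ(t)·t/π}·μ₊(e^{it}) + e^{−θ(t)·t/π}·μ₋(e^{it}). Then Y satisfies the difference equation Y(t+π) − Y(t−π) = 2ε·U(e^{it})·Y(t) for all t ∈ ℝ. -/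

import Mathlib

noncomputable section

open Complex

/-- Evaluation of a Laurent polynomial `Σ_l c_l z^l` (encoded by its finitely supported
coefficient family `c : ℤ →₀ ℂ`) at a point `w : ℂ`. -/
def evalL (c : ℤ →₀ ℂ) (w : ℂ) : ℂ :=
  c.sum fun l a => a * w ^ l

/-- The all-orders renormalized solution
`Y(t) = e^{θ(t) t/π} μ₊(e^{it}) + e^{-θ(t) t/π} μ₋(e^{it})`. -/
def Yren (θ : ℝ → ℂ) (μp μm : ℤ →₀ ℂ) (t : ℝ) : ℂ :=
  Complex.exp (θ t * t / Real.pi) * evalL μp (Complex.exp (Complex.I * t))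
    + Complex.exp (-(θ t * t / Real.pi)) * evalL μm (Complex.exp (Complex.I * t))

/-- let `U` be an even Laurent polynomial, `θ : ℝ → ℂ` with
`sinh θ(t) = ε U(e^{it})` and `θ(t+π) = θ(t)`, and let `μ₊` be even and `μ₋` odd Laurent
polynomials.  Then `Y(t) = e^{θ(t)t/π} μ₊(e^{it}) + e^{-θ(t)t/π} μ₋(e^{it})` satisfies the
difference equation `Y(t+π) - Y(t-π) = 2 ε U(e^{it}) Y(t)`. -/
theorem renormalized_solution_difference_equation
    (ε : ℝ) (U μp μm : ℤ →₀ ℂ) (θ : ℝ → ℂ)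
    (hU : ∀ z : ℂ, z ≠ 0 → evalL U (-z) = evalL U z)
    (hμp : ∀ z : ℂ, z ≠ 0 → evalL μp (-z) = evalL μp z)
    (hμm : ∀ z : ℂ, z ≠ 0 → evalL μm (-z) = -evalL μm z)
    (hθ : ∀ t : ℝ, Complex.sinh (θ t) = (ε : ℂ) * evalL U (Complex.exp (Complex.I * t)))
    (hθper : ∀ t : ℝ, θ (t + Real.pi) = θ t) :
    ∀ t : ℝ,
      Yren θ μp μm (t + Real.pi) - Yren θ μp μm (t - Real.pi)
        = 2 * (ε : ℂ) * evalL U (Complex.exp (Complex.I * t)) * Yren θ μp μm t := by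
  intro t
  have hπ : (Real.pi : ℂ) ≠ 0 := by exact_mod_cast Real.pi_ne_zero
  have hz : Complex.exp (Complex.I * t) ≠ 0 := Complex.exp_ne_zero _
  have hIπ : Complex.exp (Complex.I * (Real.pi : ℂ)) = -1 := by
    rw [mul_comm]; exact Complex.exp_pi_mul_I
  have h1 : Complex.exp (Complex.I * ((t + Real.pi : ℝ) : ℂ)) = -Complex.exp (Complex.I * t) := by
    push_cast
    rw [mul_add, Complex.exp_add, hIπ]
    ring
  have h2 : Complex.exp (Complex.I * ((t - Real.pi : ℝ) : ℂ)) = -Complex.exp (Complex.I * t) := by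
    push_cast
    rw [mul_sub, Complex.exp_sub, hIπ]
    field_simp
  have hθm : θ (t - Real.pi) = θ t := by
    have := hθper (t - Real.pi)
    simpa using this.symm
  have e1 : θ (t + Real.pi) * ((t + Real.pi : ℝ) : ℂ) / (Real.pi : ℂ)
      = θ t * t / (Real.pi : ℂ) + θ t := by
    rw [hθper]; push_cast; field_simp
  have e2 : θ (t - Real.pi) * ((t - Real.pi : ℝ) : ℂ) / (Real.pi : ℂ)
      = θ t * t / (Real.pi : ℂ) - θ t := by
    rw [hθm]; push_cast; field_simp
  have hsinh : Complex.exp (θ t) - Complex.exp (-(θ t))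
      = 2 * (ε : ℂ) * evalL U (Complex.exp (Complex.I * t)) := by
    have := hθ t
    rw [show Complex.sinh (θ t) = (Complex.exp (θ t) - Complex.exp (-(θ t))) / 2 from rfl] at this
    field_simp at this ⊢
    linear_combination this
  unfold Yren
  rw [h1, h2, e1, e2, hμp _ hz, hμm _ hz]
  rw [Complex.exp_add, neg_add, Complex.exp_add, sub_eq_add_neg (θ t * ↑t / ↑Real.pi),
    Complex.exp_add, neg_add, neg_neg, Complex.exp_add]
  linear_combination (Complex.exp (θ t * t / Real.pi) * evalL μp (Complex.exp (Complex.I * t))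
      + Complex.exp (-(θ t * t / Real.pi)) * evalL μm (Complex.exp (Complex.I * t))) * hsinh
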